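/- Let n ≥ 1, 0 ≤ t < 1, and 0 < ε < r. Define ρ₋(x) := ‖x‖ − t·xₙ on ℝⁿ (Euclidean norm minus t times the last coordinate), and let ωₙ denote the Lebesgue measure of the Euclidean unit ball in ℝⁿ. Then ∫_{{x ∈ ℝⁿ : ε < ρ₋(x) < r}} ρ₋(x)^{−n} dx = n·ωₙ·(1−t²)^{−(n+1)/2}·log(r/ε). -/

import Mathlib

open MeasureTheory


lemma sq_lt_iff_aux (t u q a : ℝ) (ht0 : 0 ≤ t) (ht1 : t < 1) (hu : 0 < u)
    (hq : 0 ≤ q) (ha : a ^ 2 ≤ q ^ 2) :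
    q - t * a < u ↔ q ^ 2 < (u + t * a) ^ 2 := by
  constructor
  · intro h
    have h1 : q < u + t * a := by linarith
    have := mul_self_lt_mul_self hq h1
    nlinarith
  · intro h
    by_contra hc
    push_neg at hc
    have h2 : u + t * a ≤ q := by linarith
    rcases le_or_gt 0 (u + t * a) with h1 | h1
    · nlinarith
    · have htpos : 0 < t := by
        rcases eq_or_lt_of_le ht0 with h' | h'
        · exfalso; rw [← h'] at h1; simp at h1; linarith
        · exact h'
      have hane : a < 0 := by nlinarith
      have h3 : -(u + t * a) ≤ -a := by nlinarith
      have h4 : -a ≤ q := by nlinarith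
      nlinarith

lemma iff_aux (t s u q a : ℝ) (ht0 : 0 ≤ t) (ht1 : t < 1)
    (hs : s = Real.sqrt (1 - t ^ 2)) (hu : 0 < u) (hq : 0 ≤ q) (ha : a ^ 2 ≤ q ^ 2) :
    q - t * a < u ↔ (q ^ 2 - a ^ 2) + (s * a - u * (t / s)) ^ 2 < (u / s) ^ 2 := by
  have h1 : (0:ℝ) < 1 - t ^ 2 := by nlinarith
  have hs2 : s ^ 2 = 1 - t ^ 2 := by rw [hs]; exact Real.sq_sqrt h1.le
  have hspos : 0 < s := by rw [hs]; exact Real.sqrt_pos.mpr h1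
  have hs2pos : (0:ℝ) < s ^ 2 := by positivity
  rw [sq_lt_iff_aux t u q a ht0 ht1 hu hq ha]
  have hsne : s ≠ 0 := hspos.ne'
  have hP : (s * a - u * (t / s)) * s = (1 - t ^ 2) * a - u * t := by
    rw [← hs2]; field_simp
  have expand : (q ^ 2 - a ^ 2 + (s * a - u * (t / s)) ^ 2) * s ^ 2
      = (q ^ 2 - a ^ 2) * (1 - t ^ 2) + ((1 - t ^ 2) * a - u * t) ^ 2 := by
    linear_combination (q ^ 2 - a ^ 2) * hs2
      + ((s * a - u * (t / s)) * s + ((1 - t ^ 2) * a - u * t)) * hP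
  have hus : (u / s) ^ 2 * s ^ 2 = u ^ 2 := by field_simp
  rw [show ((q ^ 2 - a ^ 2) + (s * a - u * (t / s)) ^ 2 < (u / s) ^ 2) ↔
      ((q ^ 2 - a ^ 2 + (s * a - u * (t / s)) ^ 2) * s ^ 2 < (u / s) ^ 2 * s ^ 2) from
      (mul_lt_mul_iff_left₀ hs2pos).symm, expand, hus]
  constructor
  · intro h
    nlinarith [h1]
  · intro h
    nlinarith [h1]

lemma vol_sublevel (n : ℕ) (hn : 1 ≤ n) (t u : ℝ) (ht0 : 0 ≤ t) (ht1 : t < 1) (hu : 0 < u) :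
    volume {x : EuclideanSpace ℝ (Fin n) | ‖x‖ - t * x ⟨n - 1, (by omega : n - 1 < n + 0)⟩ < u}
      = ENNReal.ofReal ((volume (Metric.ball (0 : EuclideanSpace ℝ (Fin n)) 1)).toReal *
          (1 - t ^ 2) ^ (-(((n : ℝ) + 1) / 2)) * u ^ n) := by
  set i₀ : Fin n := ⟨n - 1, by omega⟩
  haveI : Nonempty (Fin n) := ⟨i₀⟩
  haveI : Nontrivial (EuclideanSpace ℝ (Fin n)) := inferInstance
  have h1 : (0:ℝ) < 1 - t ^ 2 := by nlinarith
  set s : ℝ := Real.sqrt (1 - t ^ 2) with hs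
  have hspos : 0 < s := Real.sqrt_pos.mpr h1
  have hs2 : s ^ 2 = 1 - t ^ 2 := Real.sq_sqrt h1.le
  set d : Fin n → ℝ := fun i => if i = i₀ then s else 1 with hd
  set M : EuclideanSpace ℝ (Fin n) →ₗ[ℝ] EuclideanSpace ℝ (Fin n) :=
    Matrix.toEuclideanLin (Matrix.diagonal d) with hM
  have hMdet : LinearMap.det M = s := by
    rw [hM, Matrix.toEuclideanLin_eq_toLin, LinearMap.det_toLin, Matrix.det_diagonal, hd]
    simp [Finset.prod_ite_eq']
  have hMapp : ∀ (x : EuclideanSpace ℝ (Fin n)) (i : Fin n), M x i = d i * x i := by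
    intro x i
    rw [hM]
    simp [Matrix.toEuclideanLin_apply, Matrix.mulVec_diagonal]
  set w : EuclideanSpace ℝ (Fin n) := EuclideanSpace.single i₀ (t / s) with hw
  have hset : {x : EuclideanSpace ℝ (Fin n) | ‖x‖ - t * x i₀ < u}
      = M ⁻¹' Metric.ball (u • w) (u / s) := by
    ext x
    simp only [Set.mem_setOf_eq, Set.mem_preimage, Metric.mem_ball]
    have husdiv : 0 < u / s := by positivity
    rw [EuclideanSpace.dist_eq]
    rw [show (∑ i, dist (M x i) ((u • w) i) ^ 2) = ∑ i, (M x i - (u • w) i) ^ 2 from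
      Finset.sum_congr rfl fun i _ => by rw [Real.dist_eq, sq_abs]]
    rw [Real.sqrt_lt' husdiv]
    have hterm : ∀ i : Fin n, (M x i - (u • w) i) ^ 2
        = if i = i₀ then (s * x i₀ - u * (t / s)) ^ 2 else (x i) ^ 2 := by
      intro i
      rw [hMapp]
      by_cases h : i = i₀
      · subst h; simp [hd, hw, EuclideanSpace.single_apply]; try ring_nf
      · simp [h, hd, hw, EuclideanSpace.single_apply]
    have hnorm : ‖x‖ ^ 2 = ∑ i, (x i) ^ 2 := by
      rw [EuclideanSpace.norm_eq, Real.sq_sqrt (by positivity)]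
      exact Finset.sum_congr rfl fun i _ => by rw [Real.norm_eq_abs, sq_abs]
    have hsplit : ∑ i, (M x i - (u • w) i) ^ 2
        = (‖x‖ ^ 2 - (x i₀) ^ 2) + (s * x i₀ - u * (t / s)) ^ 2 := by
      simp only [hterm]
      rw [← Finset.sum_erase_add _ _ (Finset.mem_univ i₀), if_pos rfl]
      have he : ∑ i ∈ Finset.univ.erase i₀,
          (if i = i₀ then (s * x i₀ - u * (t / s)) ^ 2 else (x i) ^ 2)
          = ∑ i ∈ Finset.univ.erase i₀, (x i) ^ 2 :=
        Finset.sum_congr rfl fun i hi => if_neg (Finset.ne_of_mem_erase hi)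
      rw [he, hnorm, ← Finset.sum_erase_add Finset.univ _ (Finset.mem_univ i₀)]
      ring
    rw [hsplit]
    have ha : (x i₀) ^ 2 ≤ ‖x‖ ^ 2 := by
      rw [hnorm]
      exact Finset.single_le_sum (f := fun i => (x i) ^ 2) (fun i _ => sq_nonneg _)
        (Finset.mem_univ i₀)
    exact iff_aux t s u ‖x‖ (x i₀) ht0 ht1 hs hu (norm_nonneg x) ha
  rw [hset, Measure.addHaar_preimage_linearMap volume (by rw [hMdet]; exact hspos.ne') _,
    Measure.addHaar_ball volume _ (by positivity : (0:ℝ) ≤ u / s),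
    finrank_euclideanSpace_fin, hMdet]
  have hvol : volume (Metric.ball (0 : EuclideanSpace ℝ (Fin n)) 1)
      = ENNReal.ofReal ((volume (Metric.ball (0 : EuclideanSpace ℝ (Fin n)) 1)).toReal) :=
    (ENNReal.ofReal_toReal measure_ball_lt_top.ne).symm
  rw [hvol, ← ENNReal.ofReal_mul (by positivity), ← ENNReal.ofReal_mul (by positivity)]
  congr 1
  have hrpow : (1 - t ^ 2) ^ (-(((n : ℝ) + 1) / 2)) = (s ^ (n + 1))⁻¹ := by
    rw [hs, Real.sqrt_eq_rpow, ← Real.rpow_natCast ((1 - t^2) ^ ((1:ℝ)/2)) (n+1),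
      ← Real.rpow_mul h1.le, ← Real.rpow_neg h1.le]
    congr 1
    push_cast
    ring
  rw [hrpow, div_pow, abs_of_pos (inv_pos.mpr hspos)]
  field_simp
  rw [ENNReal.toReal_ofReal ENNReal.toReal_nonneg]; ring

lemma vol_closed_sublevel (n : ℕ) (hn : 1 ≤ n) (t u : ℝ) (ht0 : 0 ≤ t) (ht1 : t < 1)
    (hu : 0 < u) :
    volume {x : EuclideanSpace ℝ (Fin n) | ‖x‖ - t * x ⟨n - 1, (by omega : n - 1 < n + 0)⟩ ≤ u}
      = ENNReal.ofReal ((volume (Metric.ball (0 : EuclideanSpace ℝ (Fin n)) 1)).toReal *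
          (1 - t ^ 2) ^ (-(((n : ℝ) + 1) / 2)) * u ^ n) := by
  set c : ℝ := (volume (Metric.ball (0 : EuclideanSpace ℝ (Fin n)) 1)).toReal *
    (1 - t ^ 2) ^ (-(((n : ℝ) + 1) / 2)) with hc
  apply le_antisymm
  · have T : Filter.Tendsto (fun v : ℝ => ENNReal.ofReal (c * v ^ n)) (nhdsWithin u (Set.Ioi u))
        (nhds (ENNReal.ofReal (c * u ^ n))) :=
      (ENNReal.continuous_ofReal.tendsto _).comp
        (((continuous_const.mul (continuous_pow n)).tendsto u).mono_left nhdsWithin_le_nhds)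
    refine ge_of_tendsto T ?_
    refine eventually_nhdsWithin_of_forall fun v hv => ?_
    have : volume {x : EuclideanSpace ℝ (Fin n) | ‖x‖ - t * x ⟨n - 1, by omega⟩ ≤ u}
        ≤ volume {x : EuclideanSpace ℝ (Fin n) | ‖x‖ - t * x ⟨n - 1, by omega⟩ < v} :=
      measure_mono (Set.setOf_subset_setOf.mpr fun x hx => lt_of_le_of_lt hx hv)
    rw [vol_sublevel n hn t v ht0 ht1 (hu.trans hv)] at this
    exact this.trans_eq (by rw [hc])
  · have : volume {x : EuclideanSpace ℝ (Fin n) | ‖x‖ - t * x ⟨n - 1, by omega⟩ < u}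
        ≤ volume {x : EuclideanSpace ℝ (Fin n) | ‖x‖ - t * x ⟨n - 1, by omega⟩ ≤ u} :=
      measure_mono (Set.setOf_subset_setOf.mpr fun x hx => le_of_lt hx)
    rw [vol_sublevel n hn t u ht0 ht1 hu] at this
    exact le_trans (le_of_eq (by rw [hc])) this

/-- **The logarithmic integral (5.7)–(5.11)** from the proof of Proposition 5.1:
for the backward distance `ρ₋(x) = ‖x‖ − t xₙ` of the Randers metric `F(y) = ‖y‖ + t yₙ`
on `ℝⁿ` (`0 ≤ t < 1`) and `0 < ε < r`,
`∫_{ε < ρ₋ < r} ρ₋^{−n} dx = n ωₙ (1−t²)^{−(n+1)/2} log(r/ε)`,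
where `ωₙ` is the Lebesgue measure of the Euclidean unit ball. -/
theorem stmt_14 (n : ℕ) (hn : 1 ≤ n) (t ε r : ℝ) (ht0 : 0 ≤ t) (ht1 : t < 1)
    (hε : 0 < ε) (hεr : ε < r)
    (ρm : EuclideanSpace ℝ (Fin n) → ℝ)
    (hρm : ∀ x : EuclideanSpace ℝ (Fin n), ρm x = ‖x‖ - t * x ⟨n - 1, by omega⟩) :
    ∫ x in {x : EuclideanSpace ℝ (Fin n) | ε < ρm x ∧ ρm x < r}, ρm x ^ (-(n : ℝ)) =
      (n : ℝ) * (volume (Metric.ball (0 : EuclideanSpace ℝ (Fin n)) 1)).toReal *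
        (1 - t ^ 2) ^ (-(((n : ℝ) + 1) / 2)) * Real.log (r / ε) := by
  have h1 : (0:ℝ) < 1 - t ^ 2 := by nlinarith
  set i₀ : Fin n := ⟨n - 1, by omega⟩ with hi₀
  set ω : ℝ := (volume (Metric.ball (0 : EuclideanSpace ℝ (Fin n)) 1)).toReal with hω
  have hωpos : 0 < ω := by
    rw [hω]
    exact ENNReal.toReal_pos (Metric.measure_ball_pos volume 0 one_pos).ne'
      measure_ball_lt_top.ne
  set c : ℝ := ω * (1 - t ^ 2) ^ (-(((n : ℝ) + 1) / 2)) with hc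
  have hcpos : 0 < c := mul_pos hωpos (Real.rpow_pos_of_pos h1 _)
  -- continuity and measurability of ρm
  have hρfun : ρm = fun x : EuclideanSpace ℝ (Fin n) => ‖x‖ - t * x i₀ := funext hρm
  have hcont : Continuous ρm := by
    rw [hρfun]
    exact continuous_norm.sub (continuous_const.mul (EuclideanSpace.proj i₀).continuous)
  set A : Set (EuclideanSpace ℝ (Fin n)) := {x : EuclideanSpace ℝ (Fin n) | ε < ρm x ∧ ρm x < r} with hA
  have hAmeas : MeasurableSet A := by
    have : A = ρm ⁻¹' Set.Ioo ε r := by ext x; simp [hA, Set.mem_Ioo]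
    rw [this]
    exact hcont.measurable measurableSet_Ioo
  -- annulus measure
  have hannulus : ∀ a b : ℝ, 0 < a → 0 < b →
      volume {x : EuclideanSpace ℝ (Fin n) | a < ρm x ∧ ρm x < b} = ENNReal.ofReal (c * (b ^ n - a ^ n)) := by
    intro a b ha hb
    rcases le_or_gt b a with hba | hab
    · have hempty : {x : EuclideanSpace ℝ (Fin n) | a < ρm x ∧ ρm x < b} = ∅ := by
        ext x; simp only [Set.mem_setOf_eq, Set.mem_empty_iff_false, iff_false, not_and, not_lt]
        intro hx; linarith
      rw [hempty, measure_empty, eq_comm, ENNReal.ofReal_eq_zero]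
      have : b ^ n ≤ a ^ n := pow_le_pow_left₀ hb.le hba n
      nlinarith
    · have hdiff : {x : EuclideanSpace ℝ (Fin n) | a < ρm x ∧ ρm x < b}
          = {x : EuclideanSpace ℝ (Fin n) | ρm x < b} \ {x : EuclideanSpace ℝ (Fin n) | ρm x ≤ a} := by
        ext x
        simp only [Set.mem_setOf_eq, Set.mem_diff, not_le]
        tauto
      have hsub : {x : EuclideanSpace ℝ (Fin n) | ρm x ≤ a} ⊆ {x : EuclideanSpace ℝ (Fin n) | ρm x < b} :=
        fun x hx => lt_of_le_of_lt hx hab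
      have hm2 : MeasurableSet {x : EuclideanSpace ℝ (Fin n) | ρm x ≤ a} :=
        hcont.measurable measurableSet_Iic
      have hva : volume {x : EuclideanSpace ℝ (Fin n) | ρm x ≤ a} = ENNReal.ofReal (c * a ^ n) := by
        rw [hρfun]
        exact vol_closed_sublevel n hn t a ht0 ht1 ha
      have hvb : volume {x : EuclideanSpace ℝ (Fin n) | ρm x < b} = ENNReal.ofReal (c * b ^ n) := by
        rw [hρfun]
        exact vol_sublevel n hn t b ht0 ht1 hb
      rw [hdiff, measure_diff hsub hm2.nullMeasurableSet (by rw [hva]; exact ENNReal.ofReal_ne_top),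
        hva, hvb, ← ENNReal.ofReal_sub _ (by positivity)]
      congr 1
      ring
  -- the function
  have hfval : ∀ x : EuclideanSpace ℝ (Fin n), 0 < ρm x → ρm x ^ (-(n:ℝ)) = (ρm x ^ n)⁻¹ := by
    intro x hx
    rw [← Real.rpow_natCast (ρm x) n, ← Real.rpow_neg hx.le]
  have hmeas_f : Measurable fun x : EuclideanSpace ℝ (Fin n) => (ρm x ^ n)⁻¹ :=
    ((hcont.measurable.pow_const n)).inv
  have hcongr : ∫ x in A, ρm x ^ (-(n:ℝ)) = ∫ x in A, (ρm x ^ n)⁻¹ :=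
    setIntegral_congr_fun hAmeas fun x hx => hfval x (lt_trans hε hx.1)
  rw [hcongr]
  have hnn : 0 ≤ᵐ[volume.restrict A] fun x : EuclideanSpace ℝ (Fin n) => (ρm x ^ n)⁻¹ := by
    filter_upwards [ae_restrict_mem hAmeas] with x hx
    have : 0 < ρm x := lt_trans hε hx.1
    positivity
  rw [integral_eq_lintegral_of_nonneg_ae hnn hmeas_f.aestronglyMeasurable]
  rw [lintegral_eq_lintegral_meas_lt _ hnn hmeas_f.aemeasurable]
  set R1 : ℝ := (r ^ n)⁻¹ with hR1
  set R2 : ℝ := (ε ^ n)⁻¹ with hR2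
  have hrn : (0:ℝ) < r ^ n := pow_pos (hε.trans hεr) n
  have hεn : (0:ℝ) < ε ^ n := pow_pos hε n
  have hR1pos : 0 < R1 := by rw [hR1]; positivity
  have hR2pos : 0 < R2 := by rw [hR2]; positivity
  have hR12 : R1 < R2 := by
    rw [hR1, hR2]
    exact inv_lt_inv₀ hrn hεn |>.mpr (pow_lt_pow_left₀ hεr hε.le (by omega))
  -- pointwise description of the measure of superlevel sets
  have hlevel : ∀ s : ℝ, 0 < s → (volume.restrict A) {x : EuclideanSpace ℝ (Fin n) | s < (ρm x ^ n)⁻¹}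
      = volume ({x : EuclideanSpace ℝ (Fin n) | s < (ρm x ^ n)⁻¹} ∩ A) := fun s _ => Measure.restrict_apply' hAmeas
  -- split the domain
  have hsplit : Set.Ioi (0:ℝ) = (Set.Ioc 0 R1 ∪ Set.Ioc R1 R2) ∪ Set.Ioi R2 := by
    rw [Set.Ioc_union_Ioc_eq_Ioc hR1pos.le hR12.le, Set.Ioc_union_Ioi_eq_Ioi hR2pos.le]
  rw [hsplit, lintegral_union measurableSet_Ioi (by
      simp only [Set.disjoint_left]
      rintro x (hx | hx) hx2
      · exact absurd hx2.out (not_lt.mpr (hx.2.trans hR12.le))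
      · exact absurd hx2.out (not_lt.mpr hx.2) ),
    lintegral_union measurableSet_Ioc (by
      simp only [Set.disjoint_left]
      rintro x hx hx2
      exact absurd hx2.1 (not_lt.mpr hx.2))]
  -- piece 1
  have hp1 : ∫⁻ s in Set.Ioc 0 R1, (volume.restrict A) {x : EuclideanSpace ℝ (Fin n) | s < (ρm x ^ n)⁻¹}
      = ENNReal.ofReal (c * (r ^ n - ε ^ n)) * ENNReal.ofReal R1 := by
    rw [setLIntegral_congr_fun measurableSet_Ioc (
      (fun s hs => ?_))]
    · rw [setLIntegral_const, Real.volume_Ioc, sub_zero]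
    · rw [hlevel s hs.1]
      have hAs : {x : EuclideanSpace ℝ (Fin n) | s < (ρm x ^ n)⁻¹} ∩ A = A := by
        apply Set.inter_eq_right.mpr
        intro x hx
        have hρpos : 0 < ρm x := lt_trans hε hx.1
        have : (ρm x) ^ n < r ^ n := pow_lt_pow_left₀ hx.2 hρpos.le (by omega)
        have h2 : R1 < (ρm x ^ n)⁻¹ := (inv_lt_inv₀ hrn (pow_pos hρpos n)).mpr this
        simp only [Set.mem_setOf_eq]
        exact lt_of_le_of_lt hs.2 h2
      rw [hAs]
      exact hannulus ε r hε (hε.trans hεr)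
  -- piece 3
  have hp3 : ∫⁻ s in Set.Ioi R2, (volume.restrict A) {x : EuclideanSpace ℝ (Fin n) | s < (ρm x ^ n)⁻¹} = 0 := by
    rw [setLIntegral_congr_fun measurableSet_Ioi (fun s hs => ?_), lintegral_zero]
    rw [hlevel s (hR2pos.trans hs)]
    have hAs : {x : EuclideanSpace ℝ (Fin n) | s < (ρm x ^ n)⁻¹} ∩ A = ∅ := by
      ext x
      simp only [Set.mem_inter_iff, Set.mem_setOf_eq, Set.mem_empty_iff_false, iff_false, not_and]
      intro hsx hxA
      obtain ⟨hx1, hx2⟩ := hxA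
      have hρpos : 0 < ρm x := lt_trans hε hx1
      have : ε ^ n < ρm x ^ n := pow_lt_pow_left₀ hx1 hε.le (by omega)
      have h2 : (ρm x ^ n)⁻¹ < R2 := (inv_lt_inv₀ (pow_pos hρpos n) hεn).mpr this
      have := hs.out
      linarith
    rw [hAs, measure_empty]
  -- piece 2
  have hp2 : ∫⁻ s in Set.Ioc R1 R2, (volume.restrict A) {x : EuclideanSpace ℝ (Fin n) | s < (ρm x ^ n)⁻¹}
      = ENNReal.ofReal (∫ s in Set.Ioc R1 R2, c * (s⁻¹ - ε ^ n)) := by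
    rw [setLIntegral_congr_fun measurableSet_Ioc (fun s hs => ?_)]
    · rw [← ofReal_integral_eq_lintegral_ofReal]
      · apply IntegrableOn.mono_set (t := Set.Icc R1 R2) _ Set.Ioc_subset_Icc_self
        apply ContinuousOn.integrableOn_Icc
        refine continuousOn_const.mul
          (ContinuousOn.sub (continuousOn_inv₀.mono ?_) continuousOn_const)
        intro x hx
        simp only [Set.mem_compl_iff, Set.mem_singleton_iff]
        intro h0
        rw [h0] at hx
        exact absurd hx.1 (not_le.mpr hR1pos)
      · filter_upwards [ae_restrict_mem measurableSet_Ioc] with s hs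
        have hs1 : 0 < s := hR1pos.trans_le hs.1.le
        have : ε ^ n ≤ s⁻¹ := (le_inv_comm₀ hεn hs1).mpr (hR2 ▸ hs.2)
        have : (0:ℝ) ≤ s⁻¹ - ε ^ n := by linarith
        positivity
    · rw [hlevel s (hR1pos.trans hs.1)]
      have hspos : 0 < s := hR1pos.trans hs.1
      set b : ℝ := (s⁻¹) ^ ((n:ℝ)⁻¹) with hb
      have hbpos : 0 < b := Real.rpow_pos_of_pos (by positivity) _
      have hbn : b ^ n = s⁻¹ := by
        rw [hb, ← Real.rpow_natCast ((s⁻¹) ^ ((n:ℝ)⁻¹)) n, ← Real.rpow_mul (by positivity),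
          inv_mul_cancel₀ (Nat.cast_ne_zero.mpr (by omega) : (n:ℝ) ≠ 0),
          Real.rpow_one]
      have hbr : b < r := by
        have h3 : b ^ n < r ^ n := by
          rw [hbn]
          exact (inv_lt_comm₀ hrn hspos).mp hs.1
        exact lt_of_pow_lt_pow_left₀ n (le_of_lt (hε.trans hεr)) h3
      have hAs : {x : EuclideanSpace ℝ (Fin n) | s < (ρm x ^ n)⁻¹} ∩ A = {x : EuclideanSpace ℝ (Fin n) | ε < ρm x ∧ ρm x < b} := by
        ext x
        simp only [Set.mem_inter_iff, Set.mem_setOf_eq]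
        constructor
        · rintro ⟨hsx, hx1, hx2⟩
          refine ⟨hx1, ?_⟩
          have hρpos : 0 < ρm x := lt_trans hε hx1
          have h4 : ρm x ^ n < s⁻¹ :=
            (lt_inv_comm₀ hspos (pow_pos hρpos n)).mp hsx
          rw [← hbn] at h4
          exact lt_of_pow_lt_pow_left₀ n hbpos.le h4
        · rintro ⟨hx1, hx2⟩
          have hρpos : 0 < ρm x := lt_trans hε hx1
          refine ⟨?_, hx1, lt_trans hx2 hbr⟩
          have h4 : ρm x ^ n < b ^ n := pow_lt_pow_left₀ hx2 hρpos.le (by omega)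
          rw [hbn] at h4
          exact (lt_inv_comm₀ hspos (pow_pos hρpos n)).mpr h4
      rw [hAs, hannulus ε b hε hbpos, hbn]
  rw [hp1, hp2, hp3, add_zero]
  -- compute the real integral
  have hinteg : ∫ s in Set.Ioc R1 R2, c * (s⁻¹ - ε ^ n)
      = c * (((n:ℝ)) * Real.log (r / ε) - ε ^ n * (R2 - R1)) := by
    rw [← intervalIntegral.integral_of_le hR12.le]
    have h0 : (0:ℝ) ∉ Set.uIcc R1 R2 := by
      rw [Set.uIcc_of_le hR12.le]
      intro h
      exact absurd h.1 (not_le.mpr hR1pos)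
    have hint1 : IntervalIntegrable (fun x : ℝ => x⁻¹) volume R1 R2 :=
      (continuousOn_inv₀.mono (Set.subset_compl_singleton_iff.mpr h0)).intervalIntegrable
    rw [intervalIntegral.integral_const_mul,
      intervalIntegral.integral_sub hint1 intervalIntegrable_const,
      integral_inv h0, intervalIntegral.integral_const, smul_eq_mul]
    have hlog : Real.log (R2 / R1) = (n:ℝ) * Real.log (r / ε) := by
      have hq : R2 / R1 = (r / ε) ^ n := by
        rw [hR1, hR2, div_pow]
        field_simp
      rw [hq, Real.log_pow]
    rw [hlog]
    ring
  rw [hinteg]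
  -- combine
  have hnn1 : (0:ℝ) ≤ c * (r ^ n - ε ^ n) * R1 := by
    have : ε ^ n ≤ r ^ n := pow_le_pow_left₀ hε.le hεr.le n
    have h2 : (0:ℝ) ≤ r ^ n - ε ^ n := by linarith
    positivity
  have hnn2 : (0:ℝ) ≤ c * (((n:ℝ)) * Real.log (r / ε) - ε ^ n * (R2 - R1)) := by
    apply mul_nonneg hcpos.le
    have hkey : Real.log (ε ^ n / r ^ n) ≤ ε ^ n / r ^ n - 1 :=
      Real.log_le_sub_one_of_pos (by positivity)
    have hlog2 : Real.log (ε ^ n / r ^ n) = -((n:ℝ) * Real.log (r / ε)) := by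
      rw [show ε ^ n / r ^ n = ((r / ε) ^ n)⁻¹ by rw [div_pow]; field_simp,
        Real.log_inv, Real.log_pow]
    have hq : ε ^ n * (R2 - R1) = 1 - ε ^ n / r ^ n := by
      rw [hR1, hR2]
      field_simp
    rw [hq]
    rw [hlog2] at hkey
    linarith
  have hcr : (0:ℝ) ≤ c * (r ^ n - ε ^ n) := by
    have : ε ^ n ≤ r ^ n := pow_le_pow_left₀ hε.le hεr.le n
    apply mul_nonneg hcpos.le
    linarith
  rw [← ENNReal.ofReal_mul hcr, ← ENNReal.ofReal_add hnn1 hnn2]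
  rw [ENNReal.toReal_ofReal (by linarith)]
  have hfinal : c * (r ^ n - ε ^ n) * R1 + c * ((n:ℝ) * Real.log (r / ε) - ε ^ n * (R2 - R1))
      = (n:ℝ) * ω * (1 - t ^ 2) ^ (-(((n : ℝ) + 1) / 2)) * Real.log (r / ε) := by
    rw [hc, hR1, hR2]
    field_simp
    ring
  rw [hfinal]
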